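/- Let N be a positive integer and let p be a prime with p ≡ 1 (mod 4) and p > max(N, 7). Then there exist infinitely many primes q ≥ 5 such that q² ≡ −1 (mod p), q ≡ 1 (mod 4), and every prime divisor of N is a quadratic residue modulo q. -/

import Mathlib

/-- `a` is a quadratic residue modulo `q`: there is an integer `x` with `x² ≡ a (mod q)`. -/
def IsQuadResidue (a q : ℕ) : Prop := ∃ x : ℤ, x ^ 2 ≡ (a : ℤ) [ZMOD (q : ℤ)]

/-- Given `N > 0` and a prime `p ≡ 1 (mod 4)` with `p > max(N,7)`, there are infinitely
many primes `q ≥ 5` with `q² ≡ -1 (mod p)`, `q ≡ 1 (mod 4)` and every prime divisor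
of `N` a quadratic residue modulo `q`. -/
theorem infinite_auxiliary_primes (N : ℕ) (hN : 0 < N) (p : ℕ) (hp : p.Prime)
    (hp4 : p % 4 = 1) (hpN : p > max N 7) :
    {q : ℕ | q.Prime ∧ 5 ≤ q ∧ (q : ℤ) ^ 2 ≡ -1 [ZMOD (p : ℤ)] ∧ q % 4 = 1 ∧
      ∀ d : ℕ, d.Prime → d ∣ N → IsQuadResidue d q}.Infinite := by
  have hpN' : p > N := lt_of_le_of_lt (le_max_left N 7) hpN
  have hp7 : p > 7 := lt_of_le_of_lt (le_max_right N 7) hpN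
  haveI : Fact p.Prime := ⟨hp⟩
  -- get a square root of -1 mod p
  obtain ⟨i, hi⟩ : IsSquare (-1 : ZMod p) := by
    rw [ZMod.exists_sq_eq_neg_one_iff]; omega
  set r : ℕ := i.val with hr
  have hri' : ((r : ℕ) : ZMod p) = i := by
    rw [hr, ZMod.natCast_val, ZMod.cast_id]
  have hri : ((r : ℤ) : ZMod p) = i := by
    rw [Int.cast_natCast, hri']
  -- coprimality of 8*N and p
  have hp2 : p ≠ 2 := by omega
  have hco : (8 * N).Coprime p := by
    have hnd : ¬ p ∣ 8 * N := by
      intro h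
      rcases (Nat.Prime.dvd_mul hp).mp h with h8 | hN'
      · have h8' := Nat.le_of_dvd (by norm_num) h8
        have hp8 : p = 8 := by omega
        rw [hp8] at hp
        norm_num at hp
      · exact absurd (Nat.le_of_dvd hN hN') (by omega)
    exact Nat.Coprime.symm ((Nat.Prime.coprime_iff_not_dvd hp).mpr hnd)
  obtain ⟨a, ha1, hap⟩ := Nat.chineseRemainder hco 1 r
  set M : ℕ := 8 * N * p with hM
  have hM0 : M ≠ 0 := by positivity
  haveI : NeZero M := ⟨hM0⟩
  -- a is coprime to M
  have hpr : ¬ (p ∣ r) := by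
    intro h
    have : ((r : ℤ) : ZMod p) = 0 := by
      rw [ZMod.intCast_zmod_eq_zero_iff_dvd]
      exact_mod_cast Int.natCast_dvd_natCast.mpr h
    rw [hri] at this
    have h0 : (-1 : ZMod p) = 0 := by rw [hi, this, mul_zero]
    exact one_ne_zero (neg_eq_zero.mp h0)
  have hcoaM : a.Coprime M := by
    rw [hM, Nat.coprime_mul_iff_right]
    constructor
    · -- a ≡ 1 mod 8N
      have h8N : 1 < 8 * N := by omega
      have : a % (8 * N) = 1 % (8 * N) := ha1
      rw [Nat.Coprime, Nat.gcd_comm, Nat.gcd_rec, this, Nat.one_mod_eq_one.mpr (by omega)]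
      simp
    · rw [Nat.coprime_comm, Nat.Prime.coprime_iff_not_dvd hp]
      intro h
      apply hpr
      have h0 : a ≡ 0 [MOD p] := Nat.modEq_zero_iff_dvd.mpr h
      exact Nat.modEq_zero_iff_dvd.mp (hap.symm.trans h0)
  have haU : IsUnit ((a : ZMod M)) := (ZMod.isUnit_iff_coprime a M).mpr hcoaM
  have hinf := Nat.infinite_setOfPred_prime_and_eq_mod haU
  apply hinf.mono
  rintro q ⟨hq, hqa⟩
  have hqM : q ≡ a [MOD M] := (ZMod.natCast_eq_natCast_iff q a M).mp hqa
  have hq8N : q ≡ 1 [MOD 8 * N] := (hqM.of_dvd (Dvd.intro p rfl)).trans ha1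
  have hq8 : q ≡ 1 [MOD 8] := hq8N.of_dvd ⟨N, rfl⟩
  have hq8' : q % 8 = 1 := by
    have : q % 8 = 1 % 8 := hq8
    simpa using this
  have hq4 : q % 4 = 1 := by omega
  have hq5 : 5 ≤ q := by
    have := hq.two_le
    omega
  haveI : Fact q.Prime := ⟨hq⟩
  have hq2 : q ≠ 2 := by omega
  refine ⟨hq, hq5, ?_, hq4, ?_⟩
  · -- q^2 ≡ -1 mod p
    have hqp : q ≡ r [MOD p] := (hqM.of_dvd ⟨8 * N, by ring⟩).trans hap
    have hq_cast : ((q : ℕ) : ZMod p) = i :=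
      ((ZMod.natCast_eq_natCast_iff q r p).mpr hqp).trans hri'
    rw [← ZMod.intCast_eq_intCast_iff]
    push_cast
    rw [hq_cast, sq]
    exact hi.symm
  · -- quadratic residues
    intro d hd hdN
    have hsq : IsSquare ((d : ZMod q)) := by
      rcases eq_or_ne d 2 with rfl | hd2
      · rw [show ((2 : ℕ) : ZMod q) = (2 : ZMod q) by norm_cast,
          ZMod.exists_sq_eq_two_iff hq2]
        omega
      · -- d odd prime, use reciprocity
        haveI : Fact d.Prime := ⟨hd⟩
        rw [ZMod.exists_sq_eq_prime_iff_of_mod_four_eq_one hq4 hd2]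
        have hqd : q ≡ 1 [MOD d] := hq8N.of_dvd (Dvd.dvd.mul_left hdN 8)
        have : ((q : ZMod d)) = 1 := by
          have := (ZMod.natCast_eq_natCast_iff q 1 d).mpr hqd
          simpa using this
        rw [this]
        exact IsSquare.one
    obtain ⟨y, hy⟩ := hsq
    refine ⟨(y.val : ℤ), ?_⟩
    rw [← ZMod.intCast_eq_intCast_iff]
    push_cast
    rw [ZMod.natCast_val, ZMod.cast_id, sq]
    exact hy.symm
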